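/- Let E and F be HN data. Say that the HN polygon of an HN datum V has a vertex at an integer j with 0 < j ≤ rk(V) if j = rk(V) or σ_V(j) > σ_V(j+1). Then E strongly slopewise dominates F if and only if the following two conditions hold: (i) rk(E) ≥ rk(F) and σ_F(i) ≤ σ_E(i) for every integer 1 ≤ i ≤ rk(F); (ii) for every integer j with 0 < j ≤ rk(F) such that the HN polygons of both E and F have a vertex at j, either σ_E(i) = σ_F(i) for all 1 ≤ i ≤ j (the two polygons agree on [0, j]), or j < rk(E) and σ_F(j) ≤ σ_E(j+1). -/

import Mathlib

namespace HN

def slope (v : ℤ × ℤ) : ℚ := (v.2 : ℚ) / (v.1 : ℚ)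

def cross (v w : ℤ × ℤ) : ℤ := v.1 * w.2 - v.2 * w.1

def IsHNDatum (E : List (ℤ × ℤ)) : Prop :=
  (∀ v ∈ E, 1 ≤ v.1) ∧ E.Pairwise (fun v w => slope w < slope v)

def rk (E : List (ℤ × ℤ)) : ℤ := (E.map Prod.fst).sum

def deg (E : List (ℤ × ℤ)) : ℤ := (E.map Prod.snd).sum

def delta (E F : List (ℤ × ℤ)) : ℤ :=
  (E.map fun e => ((F.filter fun f => decide (slope e ≤ slope f)).map fun f => cross e f).sum).sum

def geSlope (E : List (ℤ × ℤ)) (μ : ℚ) : List (ℤ × ℤ) := E.filter fun v => decide (μ ≤ slope v)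
def gtSlope (E : List (ℤ × ℤ)) (μ : ℚ) : List (ℤ × ℤ) := E.filter fun v => decide (μ < slope v)
def ltSlope (E : List (ℤ × ℤ)) (μ : ℚ) : List (ℤ × ℤ) := E.filter fun v => decide (slope v < μ)

def sigmaList (E : List (ℤ × ℤ)) : List ℚ :=
  E.flatMap fun v => List.replicate v.1.toNat (slope v)

def sigmaSlope (E : List (ℤ × ℤ)) (i : ℕ) : ℚ := (sigmaList E).getD (i - 1) 0

def poly (E : List (ℤ × ℤ)) (k : ℕ) : ℚ := ((sigmaList E).take k).sum

def polySum (A B : List (ℤ × ℤ)) (k : ℕ) : ℚ :=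
  (((sigmaList A ++ sigmaList B).mergeSort fun a b => decide (b ≤ a)).take k).sum

def SlopewiseDom (E F : List (ℤ × ℤ)) : Prop :=
  ∀ μ : ℚ, rk (geSlope F μ) ≤ rk (geSlope E μ)

def StrongSlopewiseDom (E F : List (ℤ × ℤ)) : Prop :=
  SlopewiseDom E F ∧ ∀ μ : ℚ, rk (geSlope E μ) = rk (geSlope F μ) → geSlope E μ = geSlope F μ

def dual (E : List (ℤ × ℤ)) : List (ℤ × ℤ) := (E.map fun v => (v.1, -v.2)).reverse

def HNleSum (E A B : List (ℤ × ℤ)) : Prop :=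
  rk E = rk A + rk B ∧ deg E = deg A + deg B ∧
    ∀ k : ℕ, (k : ℤ) ≤ rk E → poly E k ≤ polySum A B k

def HasVertex (V : List (ℤ × ℤ)) (j : ℕ) : Prop :=
  (j : ℤ) = rk V ∨ sigmaSlope V (j + 1) < sigmaSlope V j

lemma rk_eq_length (E : List (ℤ × ℤ)) (hE : ∀ v ∈ E, 1 ≤ v.1) :
    ((sigmaList E).length : ℤ) = rk E := by
  induction E with
  | nil => simp [sigmaList, rk]
  | cons v E ih =>
    have h1 : 1 ≤ v.1 := hE v List.mem_cons_self
    have := ih (fun w hw => hE w (List.mem_cons_of_mem _ hw))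
    simp only [sigmaList, List.flatMap_cons, List.length_append, List.length_replicate,
      rk, List.map_cons, List.sum_cons] at *
    push_cast
    rw [Int.toNat_of_nonneg (by omega)]
    omega

lemma mem_sigmaList' {E : List (ℤ × ℤ)} {x : ℚ} (hx : x ∈ sigmaList E) :
    ∃ v ∈ E, x = slope v := by
  simp only [sigmaList, List.mem_flatMap, List.mem_replicate] at hx
  obtain ⟨v, hv, _, rfl⟩ := hx
  exact ⟨v, hv, rfl⟩

lemma sigmaList_sorted {E : List (ℤ × ℤ)} (hE : IsHNDatum E) :
    (sigmaList E).Pairwise (fun a b => b ≤ a) := by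
  induction E with
  | nil => simp [sigmaList]
  | cons v E ih =>
    have hp := hE.2
    rw [List.pairwise_cons] at hp
    have ih' := ih ⟨fun w hw => hE.1 w (List.mem_cons_of_mem _ hw), hp.2⟩
    simp only [sigmaList, List.flatMap_cons]
    rw [List.pairwise_append]
    refine ⟨?_, ih', ?_⟩
    · exact List.pairwise_replicate.mpr (Or.inr (le_refl (slope v)))
    · intro a ha b hb
      rw [List.mem_replicate] at ha
      obtain ⟨w, hw, rfl⟩ := mem_sigmaList' hb
      rw [ha.2]
      exact (hp.1 w hw).le

lemma sigmaList_geSlope (E : List (ℤ × ℤ)) (μ : ℚ) :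
    sigmaList (geSlope E μ) = (sigmaList E).filter (fun x => decide (μ ≤ x)) := by
  induction E with
  | nil => rfl
  | cons v E ih =>
    simp only [sigmaList, geSlope, List.filter_cons, List.flatMap_cons, List.filter_append] at *
    have hrep : (List.replicate v.1.toNat (slope v)).filter (fun x => decide (μ ≤ x)) =
        if μ ≤ slope v then List.replicate v.1.toNat (slope v) else [] := by
      split
      · next h =>
          rw [List.filter_eq_self.mpr]
          intro a ha
          rw [List.eq_of_mem_replicate ha]; simpa using h
      · next h =>
          rw [List.filter_eq_nil_iff.mpr]
          intro a ha
          rw [List.eq_of_mem_replicate ha]; simpa using h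
    rw [hrep]
    by_cases h : μ ≤ slope v
    · simp [h, sigmaList, geSlope, ih]
    · simp [h, sigmaList, geSlope, ih]

lemma geSlope_isHN {E : List (ℤ × ℤ)} (hE : IsHNDatum E) (μ : ℚ) : IsHNDatum (geSlope E μ) :=
  ⟨fun v hv => hE.1 v (List.mem_of_mem_filter hv), hE.2.filter _⟩

lemma filter_eq_take {s : List ℚ} (hs : s.Pairwise (fun a b => b ≤ a)) (μ : ℚ) :
    s.filter (fun x => decide (μ ≤ x)) = s.take (s.countP (fun x => decide (μ ≤ x))) := by
  induction s with
  | nil => rfl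
  | cons a s ih =>
    rw [List.pairwise_cons] at hs
    rw [List.filter_cons, List.countP_cons]
    by_cases h : μ ≤ a
    · simp only [h, decide_true, if_true, cond_true]
      rw [ih hs.2]
      rfl
    · simp only [h, decide_false, if_false, cond_false]
      have h0 : s.countP (fun x => decide (μ ≤ x)) = 0 := by
        rw [List.countP_eq_zero]
        intro x hx
        have := hs.1 x hx
        simp only [decide_eq_true_eq]
        intro hc; exact h (le_trans hc this)
      have h1 : s.filter (fun x => decide (μ ≤ x)) = [] := by
        rw [← List.length_eq_zero_iff, ← List.countP_eq_length_filter]; exact h0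
      rw [h1, h0]
      simp

lemma count_sigma_cons (v : ℤ × ℤ) (A : List (ℤ × ℤ)) (hv : 1 ≤ v.1)
    (hlt : ∀ w ∈ A, slope w < slope v) :
    (sigmaList (v :: A)).count (slope v) = v.1.toNat ∧
      (sigmaList (v :: A)).head? = some (slope v) := by
  have hn : 1 ≤ v.1.toNat := by omega
  constructor
  · simp only [sigmaList, List.flatMap_cons, List.count_append]
    rw [List.count_replicate_self]
    have : (List.count (slope v) (A.flatMap fun v => List.replicate v.1.toNat (slope v))) = 0 := by
      rw [List.count_eq_zero]
      intro hc
      obtain ⟨w, hw, hwe⟩ := mem_sigmaList' (E := A) hc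
      exact absurd (hwe ▸ hlt w hw) (lt_irrefl _)
    omega
  · simp only [sigmaList, List.flatMap_cons]
    cases hn' : v.1.toNat with
    | zero => omega
    | succ k => simp [List.replicate_succ]

lemma sigma_inj : ∀ (A B : List (ℤ × ℤ)), IsHNDatum A → IsHNDatum B →
    sigmaList A = sigmaList B → A = B := by
  intro A
  induction A with
  | nil =>
    intro B _ hB h
    cases B with
    | nil => rfl
    | cons w B' =>
      exfalso
      have hw : 1 ≤ w.1 := hB.1 w List.mem_cons_self
      have := (count_sigma_cons w B' hw (fun x hx => List.rel_of_pairwise_cons hB.2 hx)).2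
      rw [← h] at this
      simp [sigmaList] at this
  | cons v A' ih =>
    intro B hA hB h
    cases B with
    | nil =>
      exfalso
      have hv : 1 ≤ v.1 := hA.1 v List.mem_cons_self
      have := (count_sigma_cons v A' hv (fun x hx => List.rel_of_pairwise_cons hA.2 hx)).2
      rw [h] at this
      simp [sigmaList] at this
    | cons w B' =>
      have hv : 1 ≤ v.1 := hA.1 v List.mem_cons_self
      have hw : 1 ≤ w.1 := hB.1 w List.mem_cons_self
      have cA := count_sigma_cons v A' hv (fun x hx => List.rel_of_pairwise_cons hA.2 hx)
      have cB := count_sigma_cons w B' hw (fun x hx => List.rel_of_pairwise_cons hB.2 hx)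
      have hμ : slope v = slope w := by
        have := cA.2
        rw [h, cB.2] at this
        exact (Option.some_injective _ this).symm
      have hr : v.1 = w.1 := by
        have := cA.1
        rw [h, hμ, cB.1] at this
        omega
      have hd : v.2 = w.2 := by
        have hc : ((v.1 : ℚ)) ≠ 0 := by
          have : (0:ℚ) < (v.1:ℚ) := by exact_mod_cast hv
          exact ne_of_gt this
      -- slope v = slope w, v.1 = w.1
        have h2 : (v.2 : ℚ) / (v.1 : ℚ) = (w.2 : ℚ) / (v.1 : ℚ) := by
          have := hμ
          simp only [slope, hr] at this ⊢
          exact this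
        have := (div_left_inj' hc).mp h2
        exact_mod_cast this
      have hvw : v = w := Prod.ext hr hd
      have htail : sigmaList A' = sigmaList B' := by
        have h' := h
        simp only [sigmaList, List.flatMap_cons] at h'
        rw [hvw] at h'
        exact List.append_cancel_left h'
      rw [hvw, ih B' ⟨fun x hx => hA.1 x (List.mem_cons_of_mem _ hx), hA.2.of_cons⟩
        ⟨fun x hx => hB.1 x (List.mem_cons_of_mem _ hx), hB.2.of_cons⟩ htail]

lemma sorted_le {s : List ℚ} (hs : s.Pairwise (fun a b => b ≤ a)) {i j : ℕ}
    (hij : i ≤ j) (hj : j < s.length) : s[j] ≤ s[i]'(lt_of_le_of_lt hij hj) := by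
  rcases Nat.lt_or_ge i j with h | h
  · exact List.pairwise_iff_getElem.mp hs i j (lt_of_le_of_lt hij hj) hj h
  · have : i = j := le_antisymm hij h
    subst this; exact le_refl _

lemma cnt_ge (s : List ℚ) (hs : s.Pairwise (fun a b => b ≤ a)) (μ : ℚ) {i : ℕ}
    (hi : i < s.length) (hμ : μ ≤ s[i]) :
    i + 1 ≤ s.countP (fun x => decide (μ ≤ x)) := by
  have h1 : s.countP (fun x => decide (μ ≤ x)) =
      (s.take (i+1)).countP (fun x => decide (μ ≤ x)) +
      (s.drop (i+1)).countP (fun x => decide (μ ≤ x)) := by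
    conv_lhs => rw [← List.take_append_drop (i+1) s]
    rw [List.countP_append]
  have hl : (s.take (i+1)).length = i + 1 := by
    rw [List.length_take]; omega
  have h2 : (s.take (i+1)).countP (fun x => decide (μ ≤ x)) = (s.take (i+1)).length := by
    rw [List.countP_eq_length]
    intro a ha
    obtain ⟨k, hk, rfl⟩ := List.mem_iff_getElem.mp ha
    rw [List.getElem_take]
    have hk' : k ≤ i := by rw [hl] at hk; omega
    simp only [decide_eq_true_eq]
    exact le_trans hμ (sorted_le hs hk' hi)
  omega

lemma cnt_lt (s : List ℚ) (hs : s.Pairwise (fun a b => b ≤ a)) (μ : ℚ) {k : ℕ}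
    (hk : 1 ≤ k) (h : k ≤ s.countP (fun x => decide (μ ≤ x))) :
    k - 1 < s.length ∧ μ ≤ s.getD (k-1) 0 := by
  have hle : s.countP (fun x => decide (μ ≤ x)) ≤ s.length := List.countP_le_length
  have hklen : k - 1 < s.length := by omega
  refine ⟨hklen, ?_⟩
  have hft := filter_eq_take hs μ
  have hmem : s[k-1] ∈ s.filter (fun x => decide (μ ≤ x)) := by
    rw [hft]
    have hkc : k - 1 < (s.take (s.countP (fun x => decide (μ ≤ x)))).length := by
      rw [List.length_take]; omega
    have : (s.take (s.countP (fun x => decide (μ ≤ x))))[k-1] = s[k-1] := List.getElem_take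
    rw [← this]
    exact List.getElem_mem _
  have := List.of_mem_filter hmem
  rw [List.getD_eq_getElem _ _ hklen]
  simpa using this

lemma rk_geSlope {E : List (ℤ × ℤ)} (hE : IsHNDatum E) (μ : ℚ) :
    rk (geSlope E μ) = ((sigmaList E).countP (fun x => decide (μ ≤ x)) : ℤ) := by
  rw [← rk_eq_length _ (geSlope_isHN hE μ).1, sigmaList_geSlope]
  exact_mod_cast congrArg Nat.cast List.countP_eq_length_filter.symm

lemma geSlope_eq_iff {E F : List (ℤ × ℤ)} (hE : IsHNDatum E) (hF : IsHNDatum F) (μ : ℚ) :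
    geSlope E μ = geSlope F μ ↔
      (sigmaList E).filter (fun x => decide (μ ≤ x)) =
        (sigmaList F).filter (fun x => decide (μ ≤ x)) := by
  constructor
  · intro h; rw [← sigmaList_geSlope, ← sigmaList_geSlope, h]
  · intro h
    exact sigma_inj _ _ (geSlope_isHN hE μ) (geSlope_isHN hF μ)
      (by rw [sigmaList_geSlope, sigmaList_geSlope, h])

lemma main_combi (s t : List ℚ) (hs : s.Pairwise (fun a b => b ≤ a))
    (ht : t.Pairwise (fun a b => b ≤ a)) :
    ((∀ μ : ℚ, t.countP (fun x => decide (μ ≤ x)) ≤ s.countP (fun x => decide (μ ≤ x))) ∧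
      (∀ μ : ℚ, s.countP (fun x => decide (μ ≤ x)) = t.countP (fun x => decide (μ ≤ x)) →
        s.filter (fun x => decide (μ ≤ x)) = t.filter (fun x => decide (μ ≤ x)))) ↔
    ((t.length ≤ s.length ∧
        ∀ i : ℕ, 1 ≤ i → i ≤ t.length → t.getD (i-1) 0 ≤ s.getD (i-1) 0) ∧
      ∀ j : ℕ, 0 < j → j ≤ t.length →
        (j = s.length ∨ s.getD j 0 < s.getD (j-1) 0) →
        (j = t.length ∨ t.getD j 0 < t.getD (j-1) 0) →
        (∀ i : ℕ, 1 ≤ i → i ≤ j → s.getD (i-1) 0 = t.getD (i-1) 0) ∨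
          (j < s.length ∧ t.getD (j-1) 0 ≤ s.getD j 0)) := by
  constructor
  · rintro ⟨hA, hB⟩
    have hlen : t.length ≤ s.length := by
      rcases Nat.eq_zero_or_pos t.length with h0 | hpos
      · omega
      · have hlast : t.length - 1 < t.length := by omega
        have h1 : t.countP (fun x => decide (t[t.length-1] ≤ x)) = t.length := by
          apply List.countP_eq_length.mpr
          intro a ha
          obtain ⟨k, hk, rfl⟩ := List.mem_iff_getElem.mp ha
          simpa using sorted_le ht (show k ≤ t.length - 1 by omega) hlast
        have h2 := hA t[t.length-1]
        have h3 := List.countP_le_length (p := fun x => decide (t[t.length-1] ≤ x)) (l := s)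
        omega
    have hpt : ∀ i : ℕ, 1 ≤ i → i ≤ t.length → t.getD (i-1) 0 ≤ s.getD (i-1) 0 := by
      intro i h1 h2
      by_contra hc
      push_neg at hc
      have hit : i - 1 < t.length := by omega
      have his : i - 1 < s.length := by omega
      rw [List.getD_eq_getElem _ _ hit, List.getD_eq_getElem _ _ his] at hc
      have hct : i ≤ t.countP (fun x => decide (t[i-1] ≤ x)) := by
        have := cnt_ge t ht t[i-1] hit (le_refl _)
        omega
      have hcs : s.countP (fun x => decide (t[i-1] ≤ x)) ≤ i - 1 := by
        by_contra hh
        push_neg at hh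
        have := (cnt_lt s hs t[i-1] (k := i) h1 (by omega)).2
        rw [List.getD_eq_getElem _ _ his] at this
        exact absurd this (not_le.mpr hc)
      have := hA t[i-1]
      omega
    refine ⟨⟨hlen, hpt⟩, ?_⟩
    intro j hj0 hjt _ _
    by_cases hclaim : j < s.length ∧ t.getD (j-1) 0 ≤ s.getD j 0
    · exact Or.inr hclaim
    · left
      by_cases hjs : j < s.length
      · have hlt : s.getD j 0 < t.getD (j-1) 0 := by
          rcases not_and_or.mp hclaim with h | h
          · exact absurd hjs h
          · exact not_le.mp h
        have hjt1 : j - 1 < t.length := by omega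
        rw [List.getD_eq_getElem _ _ hjt1, List.getD_eq_getElem _ _ hjs] at hlt
        have hct : j ≤ t.countP (fun x => decide (t[j-1] ≤ x)) := by
          have := cnt_ge t ht t[j-1] hjt1 (le_refl _)
          omega
        have hct2 := List.countP_le_length (p := fun x => decide (t[j-1] ≤ x)) (l := t)
        have hcs_le : s.countP (fun x => decide (t[j-1] ≤ x)) ≤ j := by
          by_contra hh
          push_neg at hh
          have h2 := (cnt_lt s hs t[j-1] (k := j+1) (by omega) (by omega)).2
          simp only [Nat.add_sub_cancel] at h2
          rw [List.getD_eq_getElem _ _ hjs] at h2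
          exact absurd h2 (not_le.mpr hlt)
        have hA' := hA t[j-1]
        have hfil := hB t[j-1] (by omega)
        rw [filter_eq_take hs, filter_eq_take ht] at hfil
        have hcs_eq : s.countP (fun x => decide (t[j-1] ≤ x)) = j := by omega
        have hct_eq : t.countP (fun x => decide (t[j-1] ≤ x)) = j := by omega
        rw [hcs_eq, hct_eq] at hfil
        intro i hi1 hij
        have hi1t : i - 1 < t.length := by omega
        have hi1s : i - 1 < s.length := by omega
        rw [List.getD_eq_getElem _ _ hi1s, List.getD_eq_getElem _ _ hi1t]
        have e1 : (s.take j)[i-1]'(by rw [List.length_take]; omega) = s[i-1] :=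
          List.getElem_take
        have e2 : (t.take j)[i-1]'(by rw [List.length_take]; omega) = t[i-1] :=
          List.getElem_take
        rw [← e1, ← e2]
        congr 1
      · have hjs' : j = s.length := by omega
        have htj : t.length = j := by omega
        have hj1s : j - 1 < s.length := by omega
        have hj1t : j - 1 < t.length := by omega
        set μ := min s[j-1] t[j-1] with hμ
        have hcs : s.countP (fun x => decide (μ ≤ x)) = s.length := by
          apply List.countP_eq_length.mpr
          intro a ha
          obtain ⟨k, hk, rfl⟩ := List.mem_iff_getElem.mp ha
          have := sorted_le hs (show k ≤ j - 1 by omega) hj1s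
          simp only [decide_eq_true_eq]
          exact le_trans (min_le_left _ _) this
        have hctt : t.countP (fun x => decide (μ ≤ x)) = t.length := by
          apply List.countP_eq_length.mpr
          intro a ha
          obtain ⟨k, hk, rfl⟩ := List.mem_iff_getElem.mp ha
          have := sorted_le ht (show k ≤ j - 1 by omega) hj1t
          simp only [decide_eq_true_eq]
          exact le_trans (min_le_right _ _) this
        have hst : s = t := by
          have hfil := hB μ (by omega)
          rwa [List.filter_eq_self.mpr, List.filter_eq_self.mpr] at hfil
          · intro a ha
            obtain ⟨k, hk, rfl⟩ := List.mem_iff_getElem.mp ha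
            have := sorted_le ht (show k ≤ j - 1 by omega) hj1t
            simp only [decide_eq_true_eq]
            exact le_trans (min_le_right _ _) this
          · intro a ha
            obtain ⟨k, hk, rfl⟩ := List.mem_iff_getElem.mp ha
            have := sorted_le hs (show k ≤ j - 1 by omega) hj1s
            simp only [decide_eq_true_eq]
            exact le_trans (min_le_left _ _) this
        intro i _ _
        rw [hst]
  · rintro ⟨⟨hlen, hpt⟩, hvx⟩
    constructor
    · intro μ
      rcases Nat.eq_zero_or_pos (t.countP (fun x => decide (μ ≤ x))) with h0 | hpos
      · omega
      · obtain ⟨hk1, hk2⟩ := cnt_lt t ht μ hpos (le_refl _)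
        have hctl := List.countP_le_length (p := fun x => decide (μ ≤ x)) (l := t)
        have hks : t.countP (fun x => decide (μ ≤ x)) - 1 < s.length := by omega
        have hle := hpt (t.countP (fun x => decide (μ ≤ x))) hpos hctl
        have hμs : μ ≤ s[t.countP (fun x => decide (μ ≤ x)) - 1] := by
          rw [← List.getD_eq_getElem _ 0 hks]
          exact le_trans hk2 hle
        have := cnt_ge s hs μ hks hμs
        omega
    · intro μ hcnt
      rcases Nat.eq_zero_or_pos (s.countP (fun x => decide (μ ≤ x))) with h0 | hj
      · rw [filter_eq_take hs, filter_eq_take ht, h0, ← hcnt, h0]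
        simp
      · have hctl := List.countP_le_length (p := fun x => decide (μ ≤ x)) (l := t)
        have hcsl := List.countP_le_length (p := fun x => decide (μ ≤ x)) (l := s)
        set j := s.countP (fun x => decide (μ ≤ x)) with hjdef
        have hjt : j ≤ t.length := by omega
        have hμs : μ ≤ s.getD (j-1) 0 := (cnt_lt s hs μ hj (le_refl _)).2
        have hμt : μ ≤ t.getD (j-1) 0 := (cnt_lt t ht μ (by omega) (by omega)).2
        have hvE : j = s.length ∨ s.getD j 0 < s.getD (j-1) 0 := by
          by_cases h : j < s.length
          · right
            have h2 : s.getD j 0 < μ := by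
              by_contra hh
              push_neg at hh
              rw [List.getD_eq_getElem _ _ h] at hh
              have := cnt_ge s hs μ h hh
              omega
            exact lt_of_lt_of_le h2 hμs
          · left; omega
        have hvF : j = t.length ∨ t.getD j 0 < t.getD (j-1) 0 := by
          by_cases h : j < t.length
          · right
            have h2 : t.getD j 0 < μ := by
              by_contra hh
              push_neg at hh
              rw [List.getD_eq_getElem _ _ h] at hh
              have := cnt_ge t ht μ h hh
              omega
            exact lt_of_lt_of_le h2 hμt
          · left; omega
        rcases hvx j hj hjt hvE hvF with hcase | ⟨hjs, hle⟩
        · rw [filter_eq_take hs, filter_eq_take ht, ← hjdef, ← hcnt]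
          apply List.ext_getElem
          · rw [List.length_take, List.length_take]; omega
          · intro n h1 h2
            rw [List.length_take] at h1
            have hn : n + 1 ≤ j := by omega
            have hns : n < s.length := by omega
            have hnt : n < t.length := by omega
            have := hcase (n+1) (by omega) hn
            simp only [Nat.add_sub_cancel] at this
            rw [List.getD_eq_getElem _ _ hns, List.getD_eq_getElem _ _ hnt] at this
            rw [List.getElem_take, List.getElem_take]
            exact this
        · exfalso
          have h2 : μ ≤ s[j] := by
            rw [← List.getD_eq_getElem _ 0 hjs]
            exact le_trans hμt hle
          have := cnt_ge s hs μ hjs h2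
          omega

/-- Strong slopewise dominance in terms of HN polygons: the slopewise inequality
together with the vertex condition. -/
theorem statement8 (E F : List (ℤ × ℤ)) (hE : IsHNDatum E) (hF : IsHNDatum F) :
    StrongSlopewiseDom E F ↔
      ((rk F ≤ rk E ∧ ∀ i : ℕ, 1 ≤ i → (i : ℤ) ≤ rk F → sigmaSlope F i ≤ sigmaSlope E i) ∧
        ∀ j : ℕ, 0 < j → (j : ℤ) ≤ rk F → HasVertex E j → HasVertex F j →
          (∀ i : ℕ, 1 ≤ i → i ≤ j → sigmaSlope E i = sigmaSlope F i) ∨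
            ((j : ℤ) < rk E ∧ sigmaSlope F j ≤ sigmaSlope E (j + 1))) := by
  have hkey : StrongSlopewiseDom E F ↔
      ((∀ μ : ℚ, (sigmaList F).countP (fun x => decide (μ ≤ x)) ≤
          (sigmaList E).countP (fun x => decide (μ ≤ x))) ∧
        ∀ μ : ℚ, (sigmaList E).countP (fun x => decide (μ ≤ x)) =
            (sigmaList F).countP (fun x => decide (μ ≤ x)) →
          (sigmaList E).filter (fun x => decide (μ ≤ x)) =
            (sigmaList F).filter (fun x => decide (μ ≤ x))) := by
    constructor
    · rintro ⟨h1, h2⟩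
      refine ⟨fun μ => ?_, fun μ hμ => ?_⟩
      · have := h1 μ
        rw [rk_geSlope hE μ, rk_geSlope hF μ] at this
        exact_mod_cast this
      · refine (geSlope_eq_iff hE hF μ).mp (h2 μ ?_)
        rw [rk_geSlope hE μ, rk_geSlope hF μ]
        exact_mod_cast hμ
    · rintro ⟨h1, h2⟩
      refine ⟨fun μ => ?_, fun μ hμ => ?_⟩
      · rw [rk_geSlope hE μ, rk_geSlope hF μ]
        exact_mod_cast h1 μ
      · rw [rk_geSlope hE μ, rk_geSlope hF μ] at hμ
        exact (geSlope_eq_iff hE hF μ).mpr (h2 μ (by exact_mod_cast hμ))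
  have hsl : (((sigmaList E)).length : ℤ) = rk E := rk_eq_length E hE.1
  have htl : (((sigmaList F)).length : ℤ) = rk F := rk_eq_length F hF.1
  rw [hkey, main_combi _ _ (sigmaList_sorted hE) (sigmaList_sorted hF)]
  simp only [HasVertex, sigmaSlope, ← hsl, ← htl, Nat.add_sub_cancel, Nat.cast_inj,
    Nat.cast_le, Nat.cast_lt]

end HN
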